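/- For X_α, X_β ∈ F₀, defining J(X_α, X_β) = inf_{f₁,f₂∈G}(‖X_α∘f₁ - X_β‖_E + ‖X_α - X_β∘f₂‖_E), one has ‖X_α - X_β‖_{L^∞} ≤ 4 ‖X_α∘f - X_β‖_{L^∞} for every f ∈ G; consequently ‖X_α - X_β‖_{L^∞} ≤ 2 J(X_α, X_β). -/

import Mathlib

open MeasureTheory

/-- A triple of Lagrangian coordinates. -/
structure LagCoord where
  y : ℝ → ℝ
  U : ℝ → ℝ
  H : ℝ → ℝ

/-- `X ∈ F₀`: Lagrangian coordinates in `E = V × H¹ × V` with `y_ξ, H_ξ ≥ 0`,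
`y_ξ + H_ξ = 1` and `y_ξ H_ξ = y_ξ² U² + U_ξ²` a.e., `H(-∞) = 0`, and the
normalization `y + H = id`. -/
def InF0 (X : LagCoord) : Prop :=
  (∃ K : NNReal, LipschitzWith K X.y) ∧ (∃ K : NNReal, LipschitzWith K X.U) ∧
  (∃ K : NNReal, LipschitzWith K X.H) ∧
  (∃ C : ℝ, ∀ x, |X.y x - x| ≤ C) ∧ (∃ C : ℝ, ∀ x, |X.H x| ≤ C) ∧
  MemLp (fun x => deriv X.y x - 1) 2 (volume : Measure ℝ) ∧
  MemLp (deriv X.H) 2 (volume : Measure ℝ) ∧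
  MemLp X.U 2 (volume : Measure ℝ) ∧
  MemLp (deriv X.U) 2 (volume : Measure ℝ) ∧
  (∀ᵐ ξ ∂(volume : Measure ℝ),
    0 ≤ deriv X.y ξ ∧ 0 ≤ deriv X.H ξ ∧ deriv X.y ξ + deriv X.H ξ = 1 ∧
    deriv X.y ξ * deriv X.H ξ =
      (deriv X.y ξ) ^ 2 * (X.U ξ) ^ 2 + (deriv X.U ξ) ^ 2) ∧
  Filter.Tendsto X.H Filter.atBot (nhds 0) ∧
  (∀ ξ, X.y ξ + X.H ξ = ξ)

/-- Relabeling: `X∘f = (y∘f, U∘f, H∘f)`. -/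
def comp (X : LagCoord) (f : ℝ → ℝ) : LagCoord :=
  ⟨X.y ∘ f, X.U ∘ f, X.H ∘ f⟩

/-- `f ∈ G`: the relabeling group. -/
def InG (f : ℝ ≃ₜ ℝ) : Prop :=
  ((∃ C : ℝ, ∀ x, |f x - x| ≤ C) ∧ ∃ K : NNReal, LipschitzWith K (fun x => f x - x)) ∧
  ((∃ C : ℝ, ∀ x, |f.symm x - x| ≤ C) ∧
    ∃ K : NNReal, LipschitzWith K (fun x => f.symm x - x)) ∧
  MemLp (fun x => deriv (⇑f) x - 1) 2 (volume : Measure ℝ)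

/-- The `L^∞` norm of the difference of two Lagrangian triples:
`‖X_α - X_β‖_{L^∞} = ‖y_α - y_β‖_∞ + ‖U_α - U_β‖_∞ + ‖H_α - H_β‖_∞`. -/
noncomputable def LinfDiff (A B : LagCoord) : ℝ :=
  (⨆ x : ℝ, |A.y x - B.y x|) + (⨆ x : ℝ, |A.U x - B.U x|) +
    (⨆ x : ℝ, |A.H x - B.H x|)

/-- The `V`-norm `‖g‖_V = ‖g‖_{L^∞} + ‖g'‖_{L²}`. -/
noncomputable def Vnorm (g : ℝ → ℝ) : ℝ :=
  (⨆ x : ℝ, |g x|) + (∫ x : ℝ, (deriv g x) ^ 2) ^ (1/2 : ℝ)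

/-- The `H¹`-norm. -/
noncomputable def H1norm (g : ℝ → ℝ) : ℝ :=
  (∫ x : ℝ, ((g x) ^ 2 + (deriv g x) ^ 2)) ^ (1/2 : ℝ)

/-- The `E`-norm of the difference `X_α - X_β` (the `ζ` components differ by
`y_α - y_β`). -/
noncomputable def EDiff (A B : LagCoord) : ℝ :=
  Vnorm (fun x => A.y x - B.y x) + H1norm (fun x => A.U x - B.U x) +
    Vnorm (fun x => A.H x - B.H x)

/-- `J(X_α,X_β) = inf_{f₁,f₂ ∈ G} (‖X_α∘f₁ - X_β‖_E + ‖X_α - X_β∘f₂‖_E)`. -/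
noncomputable def Jdist (A B : LagCoord) : ℝ :=
  sInf {r : ℝ | ∃ f₁ f₂ : ℝ ≃ₜ ℝ, InG f₁ ∧ InG f₂ ∧
    r = EDiff (comp A ⇑f₁) B + EDiff A (comp B ⇑f₂)}

open Set Filter Topology

/-- Derivative bound from Lipschitz. -/
lemma abs_deriv_le_of_lipschitz {K : NNReal} {g : ℝ → ℝ} (h : LipschitzWith K g) (x : ℝ) :
    |deriv g x| ≤ K := by
  have h1 : ‖fderiv ℝ g x‖ ≤ K := norm_fderiv_le_of_lipschitz ℝ h
  have h2 : deriv g x = fderiv ℝ g x 1 := (fderiv_apply_one_eq_deriv).symm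
  rw [h2, ← Real.norm_eq_abs]
  calc ‖fderiv ℝ g x 1‖ ≤ ‖fderiv ℝ g x‖ * ‖(1:ℝ)‖ := (fderiv ℝ g x).le_opNorm 1
  _ ≤ K := by simpa using h1

/-- Monotone (continuous) functions: integral of deriv over an interval is at most
the increment. -/
lemma monotone_integral_deriv_le {φ : ℝ → ℝ} (hm : Monotone φ) (hc : Continuous φ)
    {a b : ℝ} (hab : a ≤ b) : ∫ x in a..b, deriv φ x ≤ φ b - φ a := by
  set μ := hm.stieltjesFunction.measure with hμ
  have hsf : ∀ x, hm.stieltjesFunction x = φ x := by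
    intro x
    rw [hm.stieltjesFunction_eq]
    exact rightLim_eq_of_tendsto
      ((hc.tendsto x).mono_left nhdsWithin_le_nhds)
  have hIoc : μ (Ioc a b) = ENNReal.ofReal (φ b - φ a) := by
    rw [hμ, StieltjesFunction.measure_Ioc, hsf, hsf]
  have hder : ∀ᵐ x, deriv φ x = (μ.rnDeriv volume x).toReal := by
    filter_upwards [Monotone.ae_hasDerivAt hm] with x hx
    exact hx.deriv
  rw [intervalIntegral.integral_of_le hab]
  have h1 : ∫ x in Ioc a b, deriv φ x = ∫ x in Ioc a b, (μ.rnDeriv volume x).toReal :=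
    integral_congr_ae (ae_restrict_of_ae hder)
  rw [h1]
  have h2 : ∫ x in Ioc a b, (μ.rnDeriv volume x).toReal
      = (∫⁻ x in Ioc a b, μ.rnDeriv volume x).toReal := by
    apply integral_toReal ((Measure.measurable_rnDeriv μ volume).aemeasurable)
    exact ae_restrict_of_ae (Measure.rnDeriv_lt_top μ volume)
  rw [h2]
  have h3 : (∫⁻ x in Ioc a b, μ.rnDeriv volume x) ≤ μ (Ioc a b) := by
    rw [← withDensity_apply _ measurableSet_Ioc]
    exact Measure.withDensity_rnDeriv_le μ volume (Ioc a b)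
  calc (∫⁻ x in Ioc a b, μ.rnDeriv volume x).toReal
      ≤ (μ (Ioc a b)).toReal := ENNReal.toReal_mono (by rw [hIoc]; exact ENNReal.ofReal_ne_top) h3
    _ = φ b - φ a := by rw [hIoc, ENNReal.toReal_ofReal (by linarith [hm hab])]

lemma intOn_deriv {K : NNReal} {g : ℝ → ℝ} (h : LipschitzWith K g) {a b : ℝ} :
    IntegrableOn (deriv g) (Ioc a b) := by
  refine ⟨(measurable_deriv g).aestronglyMeasurable, ?_⟩
  apply HasFiniteIntegral.of_bounded (C := (K : ℝ))
  exact Filter.Eventually.of_forall fun x => by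
    simpa [Real.norm_eq_abs] using abs_deriv_le_of_lipschitz h x

lemma lipschitzWith_linear (K : NNReal) : LipschitzWith K (fun x : ℝ => (K : ℝ) * x) := by
  apply LipschitzWith.of_dist_le_mul
  intro x y
  rw [Real.dist_eq, Real.dist_eq, ← mul_sub, abs_mul, abs_of_nonneg K.coe_nonneg]

/-- FTC for Lipschitz functions. -/
lemma lipschitz_integral_deriv {K : NNReal} {g : ℝ → ℝ} (h : LipschitzWith K g)
    {a b : ℝ} (hab : a ≤ b) : ∫ x in a..b, deriv g x = g b - g a := by
  have habs : ∀ s t : ℝ, |g s - g t| ≤ K * |s - t| := by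
    intro s t
    have := h.dist_le_mul s t
    rwa [Real.dist_eq, Real.dist_eq] at this
  set φ : ℝ → ℝ := fun x => K * x + g x with hφdef
  set ψ : ℝ → ℝ := fun x => K * x - g x with hψdef
  have hφm : Monotone φ := by
    intro s t hst
    have := habs t s
    have h2 : |t - s| = t - s := abs_of_nonneg (by linarith)
    rw [h2] at this
    have := abs_le.1 this
    simp only [hφdef]
    nlinarith
  have hψm : Monotone ψ := by
    intro s t hst
    have := habs t s
    have h2 : |t - s| = t - s := abs_of_nonneg (by linarith)
    rw [h2] at this
    have := abs_le.1 this
    simp only [hψdef]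
    nlinarith
  have hφl : LipschitzWith (K + K) φ := (lipschitzWith_linear K).add h
  have hψl : LipschitzWith (K + K) ψ := (lipschitzWith_linear K).sub h
  have hφc : Continuous φ := hφl.continuous
  have hψc : Continuous ψ := hψl.continuous
  have I1 : ∫ x in a..b, deriv φ x ≤ φ b - φ a := monotone_integral_deriv_le hφm hφc hab
  have I2 : ∫ x in a..b, deriv ψ x ≤ ψ b - ψ a := monotone_integral_deriv_le hψm hψc hab
  have hae : ∀ᵐ x : ℝ, DifferentiableAt ℝ g x := h.ae_differentiableAt_real
  have hlin : ∀ x : ℝ, HasDerivAt (fun y : ℝ => (K:ℝ) * y) (K : ℝ) x := by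
    intro x
    simpa using (hasDerivAt_id x).const_mul (K : ℝ)
  have hφd : ∀ᵐ x : ℝ, deriv φ x = K + deriv g x := by
    filter_upwards [hae] with x hx
    exact ((hlin x).add hx.hasDerivAt).deriv
  have hψd : ∀ᵐ x : ℝ, deriv ψ x = K - deriv g x := by
    filter_upwards [hae] with x hx
    exact ((hlin x).sub hx.hasDerivAt).deriv
  have hiφ : IntervalIntegrable (deriv φ) volume a b := by
    rw [intervalIntegrable_iff_integrableOn_Ioc_of_le hab]; exact intOn_deriv hφl
  have hiψ : IntervalIntegrable (deriv ψ) volume a b := by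
    rw [intervalIntegrable_iff_integrableOn_Ioc_of_le hab]; exact intOn_deriv hψl
  have hig : IntervalIntegrable (deriv g) volume a b := by
    rw [intervalIntegrable_iff_integrableOn_Ioc_of_le hab]; exact intOn_deriv h
  have hsum : (∫ x in a..b, deriv φ x) + ∫ x in a..b, deriv ψ x = 2 * K * (b - a) := by
    rw [← intervalIntegral.integral_add hiφ hiψ]
    have : ∫ x in a..b, (deriv φ x + deriv ψ x) = ∫ _x in a..b, (2 * (K:ℝ)) := by
      apply intervalIntegral.integral_congr_ae
      filter_upwards [hφd, hψd] with x h1 h2 _ using by rw [h1, h2]; ring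
    rw [this, intervalIntegral.integral_const, smul_eq_mul]
    ring
  have e1 : φ b - φ a + (ψ b - ψ a) = 2 * K * (b - a) := by simp only [hφdef, hψdef]; ring
  have I1' : ∫ x in a..b, deriv φ x = φ b - φ a := by linarith
  have : ∫ x in a..b, deriv g x = (∫ x in a..b, deriv φ x) - ∫ _x in a..b, (K:ℝ) := by
    rw [← intervalIntegral.integral_sub hiφ (intervalIntegrable_const)]
    apply intervalIntegral.integral_congr_ae
    filter_upwards [hφd] with x h1 _ using by rw [h1]; ring
  rw [this, I1', intervalIntegral.integral_const]
  simp only [hφdef, smul_eq_mul]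
  ring

/-- Lipschitz improvement from a.e. derivative bound. -/
lemma abs_sub_le_of_ae_deriv_le {K : NNReal} {g : ℝ → ℝ} (h : LipschitzWith K g)
    {c : ℝ} (hc : 0 ≤ c) (hd : ∀ᵐ x : ℝ, |deriv g x| ≤ c) (s t : ℝ) :
    |g t - g s| ≤ c * |t - s| := by
  -- wlog s ≤ t
  rcases le_total s t with hst | hst
  · have hF : g t - g s = ∫ x in s..t, deriv g x := (lipschitz_integral_deriv h hst).symm
    rw [hF, intervalIntegral.integral_of_le hst]
    have h1 : |∫ x in Ioc s t, deriv g x| ≤ ∫ x in Ioc s t, |deriv g x| := by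
      simpa [Real.norm_eq_abs] using
        norm_integral_le_integral_norm (μ := volume.restrict (Ioc s t)) (deriv g)
    have h2 : ∫ x in Ioc s t, |deriv g x| ≤ ∫ _x in Ioc s t, c := by
      apply integral_mono_ae (intOn_deriv h).abs (integrableOn_const measure_Ioc_lt_top.ne)
      exact ae_restrict_of_ae hd
    have h3 : ∫ _x in Ioc s t, c = c * (t - s) := by
      rw [setIntegral_const, measureReal_def, Real.volume_Ioc, smul_eq_mul,
        ENNReal.toReal_ofReal (by linarith)]
      ring
    calc |∫ x in Ioc s t, deriv g x| ≤ c * (t - s) := by linarith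
      _ ≤ c * |t - s| := by apply mul_le_mul_of_nonneg_left (le_abs_self _) hc
  · rw [abs_sub_comm (g t), abs_sub_comm t]
    have hF : g s - g t = ∫ x in t..s, deriv g x := (lipschitz_integral_deriv h hst).symm
    rw [hF, intervalIntegral.integral_of_le hst]
    have h1 : |∫ x in Ioc t s, deriv g x| ≤ ∫ x in Ioc t s, |deriv g x| := by
      simpa [Real.norm_eq_abs] using
        norm_integral_le_integral_norm (μ := volume.restrict (Ioc t s)) (deriv g)
    have h2 : ∫ x in Ioc t s, |deriv g x| ≤ ∫ _x in Ioc t s, c := by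
      apply integral_mono_ae (intOn_deriv h).abs (integrableOn_const measure_Ioc_lt_top.ne)
      exact ae_restrict_of_ae hd
    have h3 : ∫ _x in Ioc t s, c = c * (s - t) := by
      rw [setIntegral_const, measureReal_def, Real.volume_Ioc, smul_eq_mul,
        ENNReal.toReal_ofReal (by linarith)]
      ring
    calc |∫ x in Ioc t s, deriv g x| ≤ c * (s - t) := by linarith
      _ ≤ c * |s - t| := by apply mul_le_mul_of_nonneg_left (le_abs_self _) hc

/-- A Lipschitz function that is square-integrable is bounded. -/
lemma bound_of_lipschitz_L2 {K : NNReal} {g : ℝ → ℝ} (h : LipschitzWith K g)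
    (h2 : Integrable (fun x : ℝ => (g x) ^ 2)) (x : ℝ) :
    |g x| ≤ max 1 (4 * ((K : ℝ) + 1) * ∫ t : ℝ, (g t) ^ 2) := by
  set c := |g x| with hc
  rcases le_or_gt c 1 with hc1 | hc1
  · exact le_max_of_le_left hc1
  set Kr := (K : ℝ) + 1 with hKr
  have hKr1 : (1:ℝ) ≤ Kr := by rw [hKr]; linarith [K.coe_nonneg]
  have habs : ∀ s t : ℝ, |g s - g t| ≤ Kr * |s - t| := by
    intro s t
    have := h.dist_le_mul s t
    rw [Real.dist_eq, Real.dist_eq] at this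
    calc |g s - g t| ≤ K * |s - t| := this
      _ ≤ Kr * |s - t| := by
          apply mul_le_mul_of_nonneg_right (by simp [hKr]) (abs_nonneg _)
  set I := Icc (x - c / (2 * Kr)) (x + c / (2 * Kr)) with hI
  have hvol : (volume I).toReal = c / Kr := by
    have hcpos : (0:ℝ) < c := lt_trans zero_lt_one hc1
    have hKrpos : (0:ℝ) < Kr := by linarith
    have hdiv : (0:ℝ) < c / (2 * Kr) := by positivity
    rw [hI, Real.volume_Icc, ENNReal.toReal_ofReal (by linarith)]
    field_simp
    ring
  have hlow : ∀ t ∈ I, c ^ 2 / 4 ≤ (g t) ^ 2 := by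
    intro t ht
    have hd : |t - x| ≤ c / (2 * Kr) := by
      rw [abs_le]; constructor <;> [linarith [ht.1]; linarith [ht.2]]
    have h1 : |g t - g x| ≤ Kr * (c / (2 * Kr)) :=
      le_trans (habs t x) (mul_le_mul_of_nonneg_left hd (by positivity))
    have h2 : Kr * (c / (2 * Kr)) = c / 2 := by field_simp
    rw [h2] at h1
    have h3 : c / 2 ≤ |g t| := by
      have := abs_sub_abs_le_abs_sub (g x) (g t)
      rw [abs_sub_comm] at h1
      rw [← hc] at this
      linarith [abs_le.1 h1]
    calc c ^ 2 / 4 = (c / 2) ^ 2 := by ring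
      _ ≤ |g t| ^ 2 := by nlinarith [abs_nonneg (g t)]
      _ = (g t) ^ 2 := sq_abs _
  have hIint : ∫ t in I, (g t) ^ 2 ≤ ∫ t : ℝ, (g t) ^ 2 := by
    apply setIntegral_le_integral h2
    exact Filter.Eventually.of_forall fun t => sq_nonneg _
  have hIlow : (c ^ 2 / 4) * (c / Kr) ≤ ∫ t in I, (g t) ^ 2 := by
    have := setIntegral_mono_on (integrableOn_const measure_Icc_lt_top.ne)
      (h2.integrableOn) (measurableSet_Icc) hlow
    calc (c ^ 2 / 4) * (c / Kr) = (volume I).toReal • (c ^ 2 / 4) := by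
          rw [hvol, smul_eq_mul]; ring
      _ = ∫ _t in I, (c ^ 2 / 4) := by rw [setIntegral_const]; rfl
      _ ≤ ∫ t in I, (g t) ^ 2 := this
  have hT : c ^ 3 ≤ 4 * Kr * ∫ t : ℝ, (g t) ^ 2 := by
    have hcpos : (0:ℝ) < c := lt_trans zero_lt_one hc1
    have hKrpos : (0:ℝ) < Kr := by linarith
    have h4 : (c ^ 2 / 4) * (c / Kr) = c ^ 3 / (4 * Kr) := by field_simp
    rw [h4] at hIlow
    rw [div_le_iff₀ (by positivity)] at hIlow
    calc c ^ 3 ≤ (∫ t : ℝ, (g t) ^ 2) * (4 * Kr) := le_trans hIlow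
          (by apply mul_le_mul_of_nonneg_right hIint (by positivity))
      _ = 4 * Kr * ∫ t : ℝ, (g t) ^ 2 := by ring
  have : c ≤ c ^ 3 := by nlinarith
  exact le_max_of_le_right (le_trans this hT)

/-- Sobolev-type bound: a Lipschitz function in `H¹` is bounded by its `H¹` norm. -/
lemma abs_le_sqrt_H1 {K : NNReal} {g : ℝ → ℝ} (h : LipschitzWith K g)
    (h2 : Integrable (fun x : ℝ => g x ^ 2)) (hd2 : Integrable (fun x : ℝ => (deriv g x) ^ 2))
    (x : ℝ) : |g x| ≤ (∫ t : ℝ, (g t ^ 2 + (deriv g t) ^ 2)) ^ (1/2 : ℝ) := by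
  have hTint : Integrable (fun t : ℝ => g t ^ 2 + (deriv g t) ^ 2) := h2.add hd2
  set T := ∫ t : ℝ, (g t ^ 2 + (deriv g t) ^ 2) with hT
  have hT0 : 0 ≤ T := integral_nonneg fun t => by positivity
  set M := max 1 (4 * ((K : ℝ) + 1) * ∫ t : ℝ, (g t) ^ 2) with hM
  have hMb : ∀ t, |g t| ≤ M := fun t => bound_of_lipschitz_L2 h h2 t
  have hM1 : (1 : ℝ) ≤ M := le_max_left _ _
  have hgK : ∀ s t : ℝ, |g s - g t| ≤ K * |s - t| := by
    intro s t
    have := h.dist_le_mul s t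
    rwa [Real.dist_eq, Real.dist_eq] at this
  have hqlip : LipschitzWith (2 * Real.toNNReal M * K) (fun t : ℝ => g t ^ 2) := by
    apply LipschitzWith.of_dist_le_mul
    intro s t
    rw [Real.dist_eq, Real.dist_eq]
    have e1 : g s ^ 2 - g t ^ 2 = (g s + g t) * (g s - g t) := by ring
    rw [e1, abs_mul]
    have e2 : |g s + g t| ≤ 2 * M := by
      calc |g s + g t| ≤ |g s| + |g t| := abs_add_le _ _
        _ ≤ 2 * M := by linarith [hMb s, hMb t]
    have e3 : ((2 * Real.toNNReal M * K : NNReal) : ℝ) = 2 * M * K := by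
      push_cast
      rw [Real.coe_toNNReal _ (by linarith)]
    rw [e3]
    calc |g s + g t| * |g s - g t| ≤ (2 * M) * (K * |s - t|) := by
          apply mul_le_mul e2 (hgK s t) (abs_nonneg _) (by linarith)
      _ = 2 * M * K * |s - t| := by ring
  have key : ∀ ε : ℝ, 0 < ε → g x ^ 2 ≤ T + ε := by
    intro ε hε
    -- find a point `t ≤ x` where `g t ^ 2 ≤ ε`
    have hex : ∃ t : ℝ, t ≤ x ∧ g t ^ 2 ≤ ε := by
      by_contra hcon
      push_neg at hcon
      obtain ⟨n, hn⟩ := exists_nat_gt ((∫ t : ℝ, (g t) ^ 2) / ε)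
      have hn' : (∫ t : ℝ, (g t) ^ 2) < n * ε := by
        rw [div_lt_iff₀ hε] at hn; linarith
      have hlow : ∀ t ∈ Icc (x - n) x, ε ≤ g t ^ 2 := fun t ht => (hcon t ht.2).le
      have h1 : (n : ℝ) * ε ≤ ∫ t in Icc (x - n) x, (g t) ^ 2 := by
        have := setIntegral_mono_on (integrableOn_const measure_Icc_lt_top.ne)
          (h2.integrableOn) measurableSet_Icc hlow
        calc (n : ℝ) * ε = (volume (Icc (x - n) x)).toReal • ε := by
              rw [Real.volume_Icc, smul_eq_mul]
              rw [ENNReal.toReal_ofReal (by simp)]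
              ring_nf
          _ = ∫ _t in Icc (x - n) x, ε := by rw [setIntegral_const]; rfl
          _ ≤ _ := this
      have h2' : ∫ t in Icc (x - n) x, (g t) ^ 2 ≤ ∫ t : ℝ, (g t) ^ 2 :=
        setIntegral_le_integral h2 (Filter.Eventually.of_forall fun t => sq_nonneg _)
      linarith
    obtain ⟨t, htx, htε⟩ := hex
    have hFTC : g x ^ 2 - g t ^ 2 = ∫ s in t..x, deriv (fun u : ℝ => g u ^ 2) s :=
      (lipschitz_integral_deriv hqlip htx).symm
    have hbd : ∫ s in t..x, deriv (fun u : ℝ => g u ^ 2) s ≤ T := by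
      rw [intervalIntegral.integral_of_le htx]
      have hae : ∀ᵐ s : ℝ, deriv (fun u : ℝ => g u ^ 2) s ≤ g s ^ 2 + (deriv g s) ^ 2 := by
        filter_upwards [h.ae_differentiableAt_real] with s hs
        have : deriv (fun u : ℝ => g u ^ 2) s = 2 * g s * deriv g s := by
          have := (hs.hasDerivAt.pow 2).deriv
          exact this.trans (by ring)
        rw [this]
        nlinarith [sq_nonneg (g s - deriv g s)]
      calc ∫ s in Ioc t x, deriv (fun u : ℝ => g u ^ 2) s
          ≤ ∫ s in Ioc t x, (g s ^ 2 + (deriv g s) ^ 2) := by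
            apply integral_mono_ae (intOn_deriv hqlip) hTint.integrableOn
            exact ae_restrict_of_ae hae
        _ ≤ T := setIntegral_le_integral hTint
            (Filter.Eventually.of_forall fun s => by positivity)
    linarith
  have hsq : g x ^ 2 ≤ T := le_of_forall_pos_le_add fun ε hε => key ε hε
  calc |g x| = Real.sqrt (g x ^ 2) := (Real.sqrt_sq_eq_abs _).symm
    _ ≤ Real.sqrt T := Real.sqrt_le_sqrt hsq
    _ = T ^ (1/2 : ℝ) := Real.sqrt_eq_rpow T

lemma bddAbove_of_bound {f : ℝ → ℝ} {C : ℝ} (h : ∀ x, f x ≤ C) : BddAbove (Set.range f) :=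
  ⟨C, by rintro y ⟨x, rfl⟩; exact h x⟩

lemma lipschitzWith_one_of_abs {g : ℝ → ℝ} (h : ∀ s t : ℝ, |g t - g s| ≤ |t - s|) :
    LipschitzWith 1 g := by
  apply LipschitzWith.of_dist_le_mul
  intro x y
  rw [Real.dist_eq, Real.dist_eq]
  simpa using h y x

lemma antilip_deriv_lower {Ks : NNReal} {f : ℝ → ℝ} (hanti : AntilipschitzWith Ks f)
    {x : ℝ} (hx : DifferentiableAt ℝ f x) : 1 ≤ (Ks : ℝ) * |deriv f x| := by
  have hKs : (0 : ℝ) < Ks := by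
    rcases eq_or_lt_of_le Ks.coe_nonneg with h0 | h0
    · exfalso
      have h1 := hanti.le_mul_dist x (x + 1)
      rw [← h0, zero_mul] at h1
      have : (0:ℝ) < dist x (x+1) := by
        rw [Real.dist_eq]
        simp
      linarith
    · exact h0
  have hslope : ∀ᶠ y in 𝓝[≠] x, (Ks : ℝ)⁻¹ ≤ |slope f x y| := by
    filter_upwards [self_mem_nhdsWithin] with y hy
    have hyx : y ≠ x := hy
    have h1 := hanti.le_mul_dist x y
    rw [Real.dist_eq, Real.dist_eq] at h1
    have h2 : slope f x y = (f y - f x) / (y - x) := slope_def_field f x y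
    rw [h2, abs_div, le_div_iff₀ (abs_pos.2 (sub_ne_zero.2 hyx))]
    rw [abs_sub_comm x y] at h1
    rw [inv_mul_le_iff₀ hKs]
    rwa [abs_sub_comm (f y)]
  have htend : Filter.Tendsto (fun y => |slope f x y|) (𝓝[≠] x) (𝓝 |deriv f x|) :=
    (hasDerivAt_iff_tendsto_slope.1 hx.hasDerivAt).abs
  have hineq := ge_of_tendsto htend hslope
  rw [inv_le_iff_one_le_mul₀' hKs] at hineq
  exact hineq

lemma null_preimage (f : ℝ ≃ₜ ℝ) {Ks : NNReal} (hKs : LipschitzWith Ks ⇑f.symm)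
    {N : Set ℝ} (hN : volume N = 0) : volume (⇑f ⁻¹' N) = 0 := by
  have himg : ⇑f ⁻¹' N = ⇑f.symm '' N := by
    ext z
    constructor
    · intro hz
      exact ⟨f z, hz, f.symm_apply_apply z⟩
    · rintro ⟨y, hy, rfl⟩
      simpa [f.apply_symm_apply] using hy
  rw [himg]
  have h1 : (μH[1] : Measure ℝ) N = 0 := by rw [MeasureTheory.hausdorffMeasure_real]; exact hN
  have h2 := hKs.hausdorffMeasure_image_le (zero_le_one) N
  rw [h1, mul_zero] at h2
  have h3 : (μH[1] : Measure ℝ) (⇑f.symm '' N) = 0 := le_antisymm h2 zero_le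
  rw [MeasureTheory.hausdorffMeasure_real] at h3
  exact h3


lemma comp_sq_integrable (f : ℝ ≃ₜ ℝ) {Kf Ks : NNReal} (hKf : LipschitzWith Kf ⇑f)
    (hKs : LipschitzWith Ks ⇑f.symm) {u : ℝ → ℝ} (hu : Continuous u)
    (h2 : Integrable (fun x : ℝ => u x ^ 2)) :
    Integrable (fun x : ℝ => u (f x) ^ 2) := by
  have hanti : AntilipschitzWith Ks ⇑f :=
    hKs.to_rightInverse f.symm_apply_apply
  set s : Set ℝ := {x | DifferentiableAt ℝ (⇑f) x} with hsdef
  have hs : MeasurableSet s := measurableSet_of_differentiableAt ℝ _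
  have hsae : ∀ᵐ x : ℝ, x ∈ s := hKf.ae_differentiableAt_real
  have hder : ∀ x ∈ s, HasDerivWithinAt (⇑f) (deriv (⇑f) x) s x :=
    fun x hx => hx.hasDerivAt.hasDerivWithinAt
  have himg : IntegrableOn (fun y : ℝ => u y ^ 2) (⇑f '' s) := h2.integrableOn
  rw [integrableOn_image_iff_integrableOn_abs_deriv_smul hs hder f.injective.injOn] at himg
  have hres : volume.restrict s = volume := Measure.restrict_eq_self_of_ae_mem hsae
  have hint : IntegrableOn (fun x : ℝ => u (f x) ^ 2) s := by
    apply Integrable.mono' (himg.const_mul (Ks : ℝ))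
    · exact ((hu.comp f.continuous).pow 2).aestronglyMeasurable
    · rw [ae_restrict_iff' hs]
      apply Filter.Eventually.of_forall
      intro x hx
      have hl : 1 ≤ (Ks : ℝ) * |deriv (⇑f) x| := antilip_deriv_lower hanti hx
      have : ‖u (f x) ^ 2‖ = u (f x) ^ 2 := by
        rw [Real.norm_eq_abs, abs_of_nonneg (sq_nonneg _)]
      rw [this, smul_eq_mul]
      calc u (f x) ^ 2 = 1 * u (f x) ^ 2 := by ring
        _ ≤ ((Ks : ℝ) * |deriv (⇑f) x|) * u (f x) ^ 2 :=
            mul_le_mul_of_nonneg_right hl (sq_nonneg _)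
        _ = (Ks : ℝ) * (|deriv (⇑f) x| * u (f x) ^ 2) := by ring
  rwa [IntegrableOn, hres] at hint

lemma comp_deriv_sq_integrable (f : ℝ ≃ₜ ℝ) {Kf Ks Ku : NNReal} (hKf : LipschitzWith Kf ⇑f)
    (hKs : LipschitzWith Ks ⇑f.symm) {u : ℝ → ℝ} (hu : LipschitzWith Ku u)
    (hd2 : Integrable (fun x : ℝ => (deriv u x) ^ 2)) :
    Integrable (fun x : ℝ => (deriv (u ∘ ⇑f) x) ^ 2) := by
  set s : Set ℝ := {x | DifferentiableAt ℝ (⇑f) x ∧ DifferentiableAt ℝ u (f x)} with hsdef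
  have hs : MeasurableSet s := by
    apply MeasurableSet.inter
    · exact measurableSet_of_differentiableAt ℝ _
    · exact f.continuous.measurable (measurableSet_of_differentiableAt ℝ _)
  have hsae : ∀ᵐ x : ℝ, x ∈ s := by
    have h1 : ∀ᵐ x : ℝ, DifferentiableAt ℝ (⇑f) x := hKf.ae_differentiableAt_real
    have h2 : ∀ᵐ y : ℝ, DifferentiableAt ℝ u y := hu.ae_differentiableAt_real
    have hN : volume {y : ℝ | ¬ DifferentiableAt ℝ u y} = 0 := by
      rw [← MeasureTheory.ae_iff] at *; exact h2
    have h3 : volume (⇑f ⁻¹' {y : ℝ | ¬ DifferentiableAt ℝ u y}) = 0 :=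
      null_preimage f hKs hN
    have h4 : ∀ᵐ x : ℝ, DifferentiableAt ℝ u (f x) := by
      rw [MeasureTheory.ae_iff]
      convert h3 using 2
      rfl
    filter_upwards [h1, h4] with x hx1 hx2 using ⟨hx1, hx2⟩
  have hder : ∀ x ∈ s, HasDerivWithinAt (⇑f) (deriv (⇑f) x) s x :=
    fun x hx => hx.1.hasDerivAt.hasDerivWithinAt
  have hchain : ∀ x ∈ s, deriv (u ∘ ⇑f) x = deriv u (f x) * deriv (⇑f) x :=
    fun x hx => (hx.2.hasDerivAt.comp x hx.1.hasDerivAt).deriv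
  have himg : IntegrableOn (fun y : ℝ => (deriv u y) ^ 2) (⇑f '' s) := hd2.integrableOn
  rw [integrableOn_image_iff_integrableOn_abs_deriv_smul hs hder f.injective.injOn] at himg
  have hres : volume.restrict s = volume := Measure.restrict_eq_self_of_ae_mem hsae
  have hint : IntegrableOn (fun x : ℝ => (deriv (u ∘ ⇑f) x) ^ 2) s := by
    apply Integrable.mono' (himg.const_mul (Kf : ℝ))
    · exact ((measurable_deriv (u ∘ ⇑f)).pow_const 2).aestronglyMeasurable
    · rw [ae_restrict_iff' hs]
      apply Filter.Eventually.of_forall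
      intro x hx
      have hKb : |deriv (⇑f) x| ≤ Kf := abs_deriv_le_of_lipschitz hKf x
      have : ‖(deriv (u ∘ ⇑f) x) ^ 2‖ = (deriv (u ∘ ⇑f) x) ^ 2 := by
        rw [Real.norm_eq_abs, abs_of_nonneg (sq_nonneg _)]
      rw [this, hchain x hx, smul_eq_mul]
      calc (deriv u (f x) * deriv (⇑f) x) ^ 2
          = (deriv (⇑f) x)^2 * (deriv u (f x))^2 := by ring
        _ = (|deriv (⇑f) x| * |deriv (⇑f) x|) * (deriv u (f x))^2 := by
            rw [← abs_mul, ← sq, abs_of_nonneg (sq_nonneg _)]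
        _ ≤ ((Kf : ℝ) * |deriv (⇑f) x|) * (deriv u (f x))^2 := by
            apply mul_le_mul_of_nonneg_right _ (sq_nonneg _)
            exact mul_le_mul_of_nonneg_right hKb (abs_nonneg _)
        _ = (Kf : ℝ) * (|deriv (⇑f) x| * (deriv u (f x))^2) := by ring
  rwa [IntegrableOn, hres] at hint


lemma linf_comm (P Q : LagCoord) : LinfDiff P Q = LinfDiff Q P := by
  simp only [LinfDiff, abs_sub_comm]

/-- The core `L^∞` relabeling estimate. -/
lemma linf_main (A B : LagCoord) (g : ℝ → ℝ)
    (hLy : ∀ s t : ℝ, |A.y t - A.y s| ≤ |t - s|)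
    (hLU : ∀ s t : ℝ, |A.U t - A.U s| ≤ |t - s|)
    (hLH : ∀ s t : ℝ, |A.H t - A.H s| ≤ |t - s|)
    (hidA : ∀ ξ : ℝ, A.y ξ + A.H ξ = ξ) (hidB : ∀ ξ : ℝ, B.y ξ + B.H ξ = ξ)
    (hby : BddAbove (Set.range fun x : ℝ => |A.y (g x) - B.y x|))
    (hbU : BddAbove (Set.range fun x : ℝ => |A.U (g x) - B.U x|))
    (hbH : BddAbove (Set.range fun x : ℝ => |A.H (g x) - B.H x|)) :
    LinfDiff A B ≤ 4 * LinfDiff (comp A g) B := by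
  set Sy := ⨆ x : ℝ, |A.y (g x) - B.y x| with hSy
  set SU := ⨆ x : ℝ, |A.U (g x) - B.U x| with hSU
  set SH := ⨆ x : ℝ, |A.H (g x) - B.H x| with hSH
  have hSy0 : 0 ≤ Sy := Real.iSup_nonneg fun x => abs_nonneg _
  have hSU0 : 0 ≤ SU := Real.iSup_nonneg fun x => abs_nonneg _
  have hSH0 : 0 ≤ SH := Real.iSup_nonneg fun x => abs_nonneg _
  have hay : ∀ x : ℝ, |A.y (g x) - B.y x| ≤ Sy := fun x => le_ciSup hby x
  have haU : ∀ x : ℝ, |A.U (g x) - B.U x| ≤ SU := fun x => le_ciSup hbU x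
  have haH : ∀ x : ℝ, |A.H (g x) - B.H x| ≤ SH := fun x => le_ciSup hbH x
  have hfx : ∀ x : ℝ, |g x - x| ≤ Sy + SH := by
    intro x
    have e1 : g x - x = (A.y (g x) - B.y x) + (A.H (g x) - B.H x) := by
      have := hidA (g x)
      have := hidB x
      linarith
    rw [e1]
    calc |(A.y (g x) - B.y x) + (A.H (g x) - B.H x)|
        ≤ |A.y (g x) - B.y x| + |A.H (g x) - B.H x| := abs_add_le _ _
      _ ≤ Sy + SH := add_le_add (hay x) (haH x)
  have hcomp : LinfDiff (comp A g) B = Sy + SU + SH := rfl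
  have hy : (⨆ x : ℝ, |A.y x - B.y x|) ≤ 2 * Sy + SH := by
    apply ciSup_le
    intro x
    calc |A.y x - B.y x| ≤ |A.y x - A.y (g x)| + |A.y (g x) - B.y x| := abs_sub_le _ _ _
      _ ≤ |x - g x| + Sy := add_le_add (hLy (g x) x) (hay x)
      _ ≤ (Sy + SH) + Sy := by
          rw [abs_sub_comm]
          exact add_le_add_left (hfx x) _
      _ = 2 * Sy + SH := by ring
  have hU : (⨆ x : ℝ, |A.U x - B.U x|) ≤ Sy + SU + SH := by
    apply ciSup_le
    intro x
    calc |A.U x - B.U x| ≤ |A.U x - A.U (g x)| + |A.U (g x) - B.U x| := abs_sub_le _ _ _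
      _ ≤ |x - g x| + SU := add_le_add (hLU (g x) x) (haU x)
      _ ≤ (Sy + SH) + SU := by
          rw [abs_sub_comm]
          exact add_le_add_left (hfx x) _
      _ = Sy + SU + SH := by ring
  have hH : (⨆ x : ℝ, |A.H x - B.H x|) ≤ Sy + 2 * SH := by
    apply ciSup_le
    intro x
    calc |A.H x - B.H x| ≤ |A.H x - A.H (g x)| + |A.H (g x) - B.H x| := abs_sub_le _ _ _
      _ ≤ |x - g x| + SH := add_le_add (hLH (g x) x) (haH x)
      _ ≤ (Sy + SH) + SH := by
          rw [abs_sub_comm]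
          exact add_le_add_left (hfx x) _
      _ = Sy + 2 * SH := by ring
  rw [hcomp]
  unfold LinfDiff
  linarith

/-- The components of an element of `F₀` are 1-Lipschitz. -/
lemma InF0.lip1 {A : LagCoord} (hA : InF0 A) :
    (∀ s t : ℝ, |A.y t - A.y s| ≤ |t - s|) ∧ (∀ s t : ℝ, |A.U t - A.U s| ≤ |t - s|) ∧
      (∀ s t : ℝ, |A.H t - A.H s| ≤ |t - s|) := by
  obtain ⟨⟨Ky, hKy⟩, ⟨KU, hKU⟩, ⟨KH, hKH⟩, _, _, _, _, _, _, hae, _, _⟩ := hA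
  have hy : ∀ᵐ ξ : ℝ, |deriv A.y ξ| ≤ 1 := by
    filter_upwards [hae] with ξ hξ
    obtain ⟨h1, h2, h3, _⟩ := hξ
    rw [abs_le]; constructor <;> linarith
  have hH : ∀ᵐ ξ : ℝ, |deriv A.H ξ| ≤ 1 := by
    filter_upwards [hae] with ξ hξ
    obtain ⟨h1, h2, h3, _⟩ := hξ
    rw [abs_le]; constructor <;> linarith
  have hU : ∀ᵐ ξ : ℝ, |deriv A.U ξ| ≤ 1 := by
    filter_upwards [hae] with ξ hξ
    obtain ⟨h1, h2, h3, h4⟩ := hξ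
    have h5 : (deriv A.U ξ) ^ 2 ≤ 1 := by nlinarith [sq_nonneg (deriv A.y ξ * A.U ξ)]
    nlinarith [abs_nonneg (deriv A.U ξ), sq_abs (deriv A.U ξ)]
  refine ⟨fun s t => ?_, fun s t => ?_, fun s t => ?_⟩
  · simpa using abs_sub_le_of_ae_deriv_le hKy zero_le_one hy s t
  · simpa using abs_sub_le_of_ae_deriv_le hKU zero_le_one hU s t
  · simpa using abs_sub_le_of_ae_deriv_le hKH zero_le_one hH s t

/-- Lipschitz constants for an element of `G` and its inverse. -/
lemma InG.lip {f : ℝ ≃ₜ ℝ} (hf : InG f) :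
    ∃ K : NNReal, LipschitzWith K ⇑f ∧ LipschitzWith K ⇑f.symm := by
  obtain ⟨⟨_, ⟨K1, hK1⟩⟩, ⟨_, ⟨K2, hK2⟩⟩, _⟩ := hf
  refine ⟨max K1 K2 + 1, ?_, ?_⟩
  · have : ⇑f = fun x => (f x - x) + x := by funext x; ring
    rw [this]
    exact ((hK1.weaken (le_max_left _ _)).add LipschitzWith.id)
  · have : ⇑f.symm = fun x => (f.symm x - x) + x := by funext x; ring
    rw [this]
    exact ((hK2.weaken (le_max_right _ _)).add LipschitzWith.id)

/-- `L^∞` diff is dominated by the `E`-norm diff given regularity of the `U`-component. -/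
lemma linf_le_ediff (P Q : LagCoord) {KU : NNReal}
    (hlip : LipschitzWith KU (fun x => P.U x - Q.U x))
    (h2 : Integrable (fun x : ℝ => (P.U x - Q.U x) ^ 2))
    (hd2 : Integrable (fun x : ℝ => (deriv (fun t => P.U t - Q.U t) x) ^ 2)) :
    LinfDiff P Q ≤ EDiff P Q := by
  unfold LinfDiff EDiff Vnorm H1norm
  have hU : (⨆ x : ℝ, |P.U x - Q.U x|)
      ≤ (∫ x : ℝ, ((P.U x - Q.U x) ^ 2 + (deriv (fun t => P.U t - Q.U t) x) ^ 2)) ^ (1/2 : ℝ) :=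
    ciSup_le fun x => abs_le_sqrt_H1 hlip h2 hd2 x
  have hy2 : (0:ℝ) ≤ (∫ x : ℝ, (deriv (fun t => P.y t - Q.y t) x) ^ 2) ^ (1/2 : ℝ) :=
    Real.rpow_nonneg (integral_nonneg fun x => sq_nonneg _) _
  have hH2 : (0:ℝ) ≤ (∫ x : ℝ, (deriv (fun t => P.H t - Q.H t) x) ^ 2) ^ (1/2 : ℝ) :=
    Real.rpow_nonneg (integral_nonneg fun x => sq_nonneg _) _
  have h1 : (⨆ x : ℝ, |P.U x - Q.U x|)
      ≤ (∫ x : ℝ, ((fun t => P.U t - Q.U t) x ^ 2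
          + (deriv (fun t => P.U t - Q.U t) x) ^ 2)) ^ (1/2 : ℝ) := hU
  linarith

lemma InG_refl : InG (Homeomorph.refl ℝ) := by
  have h0 : (fun x : ℝ => (Homeomorph.refl ℝ) x - x) = fun _ : ℝ => (0:ℝ) := by
    funext x; simp
  have h0' : (fun x : ℝ => (Homeomorph.refl ℝ).symm x - x) = fun _ : ℝ => (0:ℝ) := by
    funext x; simp
  refine ⟨⟨⟨0, ?_⟩, ⟨0, ?_⟩⟩, ⟨⟨0, ?_⟩, ⟨0, ?_⟩⟩, ?_⟩
  · intro x; simp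
  · rw [h0]; exact LipschitzWith.const' 0
  · intro x; simp
  · rw [h0']; exact LipschitzWith.const' 0
  · have : (fun x : ℝ => deriv (⇑(Homeomorph.refl ℝ)) x - 1) = fun _ : ℝ => (0:ℝ) := by
      funext x
      have hid : ⇑(Homeomorph.refl ℝ) = (id : ℝ → ℝ) := rfl
      rw [hid, deriv_id]
      ring
    rw [this]
    exact MemLp.zero'

lemma ediff_facts_left (A B : LagCoord) (f : ℝ ≃ₜ ℝ) (hf : InG f)
    (hAU1 : LipschitzWith 1 A.U) (hBU1 : LipschitzWith 1 B.U)
    (hAU2 : MemLp A.U 2 (volume : Measure ℝ)) (hAUd2 : MemLp (deriv A.U) 2 (volume : Measure ℝ))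
    (hBU2 : MemLp B.U 2 (volume : Measure ℝ)) (hBUd2 : MemLp (deriv B.U) 2 (volume : Measure ℝ)) :
    LinfDiff (comp A ⇑f) B ≤ EDiff (comp A ⇑f) B := by
  obtain ⟨Kf, hKf, hKs⟩ := hf.lip
  have hlipΔ : LipschitzWith (1 * Kf + 1) (fun x => A.U (f x) - B.U x) :=
    (hAU1.comp hKf).sub hBU1
  have hcomp2 : Integrable (fun x : ℝ => A.U (f x) ^ 2) :=
    comp_sq_integrable f hKf hKs hAU1.continuous hAU2.integrable_sq
  have h2Δ : Integrable (fun x : ℝ => (A.U (f x) - B.U x) ^ 2) := by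
    apply Integrable.mono' ((hcomp2.const_mul 2).add ((hBU2.integrable_sq).const_mul 2))
    · exact (((hAU1.continuous.comp f.continuous).sub hBU1.continuous).pow 2).aestronglyMeasurable
    · apply Filter.Eventually.of_forall
      intro x
      rw [Real.norm_eq_abs, abs_of_nonneg (sq_nonneg _)]
      simp only [Pi.add_apply]
      nlinarith [sq_nonneg (A.U (f x) + B.U x)]
  have hcompd : Integrable (fun x : ℝ => (deriv (A.U ∘ ⇑f) x) ^ 2) :=
    comp_deriv_sq_integrable f hKf hKs hAU1 hAUd2.integrable_sq
  have hae : ∀ᵐ x : ℝ, deriv (fun t => A.U (f t) - B.U t) x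
      = deriv (A.U ∘ ⇑f) x - deriv B.U x := by
    filter_upwards [(hAU1.comp hKf).ae_differentiableAt_real,
      hBU1.ae_differentiableAt_real] with x h1 h2
    exact (h1.hasDerivAt.sub h2.hasDerivAt).deriv
  have hd2Δ : Integrable (fun x : ℝ => (deriv (fun t => A.U (f t) - B.U t) x) ^ 2) := by
    apply Integrable.mono' ((hcompd.const_mul 2).add ((hBUd2.integrable_sq).const_mul 2))
    · exact ((measurable_deriv (fun t => A.U (f t) - B.U t)).pow_const 2).aestronglyMeasurable
    · filter_upwards [hae] with x hx
      rw [Real.norm_eq_abs, abs_of_nonneg (sq_nonneg _), hx]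
      simp only [Pi.add_apply]
      nlinarith [sq_nonneg (deriv (A.U ∘ ⇑f) x + deriv B.U x)]
  exact linf_le_ediff (comp A ⇑f) B hlipΔ h2Δ hd2Δ

lemma ediff_facts_right (A B : LagCoord) (f : ℝ ≃ₜ ℝ) (hf : InG f)
    (hAU1 : LipschitzWith 1 A.U) (hBU1 : LipschitzWith 1 B.U)
    (hAU2 : MemLp A.U 2 (volume : Measure ℝ)) (hAUd2 : MemLp (deriv A.U) 2 (volume : Measure ℝ))
    (hBU2 : MemLp B.U 2 (volume : Measure ℝ)) (hBUd2 : MemLp (deriv B.U) 2 (volume : Measure ℝ)) :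
    LinfDiff A (comp B ⇑f) ≤ EDiff A (comp B ⇑f) := by
  obtain ⟨Kf, hKf, hKs⟩ := hf.lip
  have hlipΔ : LipschitzWith (1 + 1 * Kf) (fun x => A.U x - B.U (f x)) :=
    hAU1.sub (hBU1.comp hKf)
  have hcomp2 : Integrable (fun x : ℝ => B.U (f x) ^ 2) :=
    comp_sq_integrable f hKf hKs hBU1.continuous hBU2.integrable_sq
  have h2Δ : Integrable (fun x : ℝ => (A.U x - B.U (f x)) ^ 2) := by
    apply Integrable.mono' (((hAU2.integrable_sq).const_mul 2).add (hcomp2.const_mul 2))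
    · exact ((hAU1.continuous.sub (hBU1.continuous.comp f.continuous)).pow 2).aestronglyMeasurable
    · apply Filter.Eventually.of_forall
      intro x
      rw [Real.norm_eq_abs, abs_of_nonneg (sq_nonneg _)]
      simp only [Pi.add_apply]
      nlinarith [sq_nonneg (A.U x + B.U (f x))]
  have hcompd : Integrable (fun x : ℝ => (deriv (B.U ∘ ⇑f) x) ^ 2) :=
    comp_deriv_sq_integrable f hKf hKs hBU1 hBUd2.integrable_sq
  have hae : ∀ᵐ x : ℝ, deriv (fun t => A.U t - B.U (f t)) x
      = deriv A.U x - deriv (B.U ∘ ⇑f) x := by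
    filter_upwards [hAU1.ae_differentiableAt_real,
      (hBU1.comp hKf).ae_differentiableAt_real] with x h1 h2
    exact (h1.hasDerivAt.sub h2.hasDerivAt).deriv
  have hd2Δ : Integrable (fun x : ℝ => (deriv (fun t => A.U t - B.U (f t)) x) ^ 2) := by
    apply Integrable.mono' (((hAUd2.integrable_sq).const_mul 2).add (hcompd.const_mul 2))
    · exact ((measurable_deriv (fun t => A.U t - B.U (f t))).pow_const 2).aestronglyMeasurable
    · filter_upwards [hae] with x hx
      rw [Real.norm_eq_abs, abs_of_nonneg (sq_nonneg _), hx]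
      simp only [Pi.add_apply]
      nlinarith [sq_nonneg (deriv A.U x + deriv (B.U ∘ ⇑f) x)]
  exact linf_le_ediff A (comp B ⇑f) hlipΔ h2Δ hd2Δ


/-- For `X_α, X_β ∈ F₀`: `‖X_α - X_β‖_{L^∞} ≤ 4 ‖X_α∘f - X_β‖_{L^∞}` for every
`f ∈ G`, and consequently `‖X_α - X_β‖_{L^∞} ≤ 2 J(X_α,X_β)`. -/
theorem stmt11 (A B : LagCoord) (hA : InF0 A) (hB : InF0 B) :
    (∀ f : ℝ ≃ₜ ℝ, InG f →
      LinfDiff A B ≤ 4 * LinfDiff (comp A ⇑f) B) ∧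
    LinfDiff A B ≤ 2 * Jdist A B := by
  have hAl := InF0.lip1 hA
  have hBl := InF0.lip1 hB
  obtain ⟨-, -, -, ⟨CAy, hCAy⟩, ⟨CAH, hCAH⟩, -, -, hAU2, hAUd2, -, -, hidA⟩ := hA
  obtain ⟨-, -, -, ⟨CBy, hCBy⟩, ⟨CBH, hCBH⟩, -, -, hBU2, hBUd2, -, -, hidB⟩ := hB
  have hAU1 : LipschitzWith 1 A.U := lipschitzWith_one_of_abs hAl.2.1
  have hBU1 : LipschitzWith 1 B.U := lipschitzWith_one_of_abs hBl.2.1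
  have hMA := fun x => bound_of_lipschitz_L2 hAU1 hAU2.integrable_sq x
  have hMB := fun x => bound_of_lipschitz_L2 hBU1 hBU2.integrable_sq x
  set MA := max 1 (4 * (((1:NNReal) : ℝ) + 1) * ∫ t : ℝ, (A.U t) ^ 2) with hMAdef
  set MB := max 1 (4 * (((1:NNReal) : ℝ) + 1) * ∫ t : ℝ, (B.U t) ^ 2) with hMBdef
  -- Part 1
  have part1 : ∀ f : ℝ ≃ₜ ℝ, InG f → LinfDiff A B ≤ 4 * LinfDiff (comp A ⇑f) B := by
    intro f hf
    obtain ⟨Cf, hCf⟩ := hf.1.1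
    apply linf_main A B ⇑f hAl.1 hAl.2.1 hAl.2.2 hidA hidB
    · apply bddAbove_of_bound (C := CAy + Cf + CBy)
      intro x
      have e : A.y (f x) - B.y x = (A.y (f x) - f x) + (f x - x) + (x - B.y x) := by ring
      rw [e]
      calc |(A.y (f x) - f x) + (f x - x) + (x - B.y x)|
          ≤ |(A.y (f x) - f x) + (f x - x)| + |x - B.y x| := abs_add_le _ _
        _ ≤ |A.y (f x) - f x| + |f x - x| + |x - B.y x| :=
            add_le_add_left (abs_add_le _ _) _
        _ ≤ CAy + Cf + CBy := by
            have h3 : |x - B.y x| ≤ CBy := by rw [abs_sub_comm]; exact hCBy x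
            exact add_le_add (add_le_add (hCAy (f x)) (hCf x)) h3
    · apply bddAbove_of_bound (C := MA + MB)
      intro x
      calc |A.U (f x) - B.U x| ≤ |A.U (f x)| + |B.U x| := abs_sub _ _
        _ ≤ MA + MB := add_le_add (hMA (f x)) (hMB x)
    · apply bddAbove_of_bound (C := CAH + CBH)
      intro x
      calc |A.H (f x) - B.H x| ≤ |A.H (f x)| + |B.H x| := abs_sub _ _
        _ ≤ CAH + CBH := add_le_add (hCAH (f x)) (hCBH x)
  have part1' : ∀ f : ℝ ≃ₜ ℝ, InG f → LinfDiff A B ≤ 4 * LinfDiff A (comp B ⇑f) := by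
    intro f hf
    obtain ⟨Cf, hCf⟩ := hf.1.1
    have h := linf_main B A ⇑f hBl.1 hBl.2.1 hBl.2.2 hidB hidA ?_ ?_ ?_
    · rw [linf_comm B A, linf_comm (comp B ⇑f) A] at h
      exact h
    · apply bddAbove_of_bound (C := CBy + Cf + CAy)
      intro x
      have e : B.y (f x) - A.y x = (B.y (f x) - f x) + (f x - x) + (x - A.y x) := by ring
      rw [e]
      calc |(B.y (f x) - f x) + (f x - x) + (x - A.y x)|
          ≤ |(B.y (f x) - f x) + (f x - x)| + |x - A.y x| := abs_add_le _ _
        _ ≤ |B.y (f x) - f x| + |f x - x| + |x - A.y x| :=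
            add_le_add_left (abs_add_le _ _) _
        _ ≤ CBy + Cf + CAy := by
            have h3 : |x - A.y x| ≤ CAy := by rw [abs_sub_comm]; exact hCAy x
            exact add_le_add (add_le_add (hCBy (f x)) (hCf x)) h3
    · apply bddAbove_of_bound (C := MB + MA)
      intro x
      calc |B.U (f x) - A.U x| ≤ |B.U (f x)| + |A.U x| := abs_sub _ _
        _ ≤ MB + MA := add_le_add (hMB (f x)) (hMA x)
    · apply bddAbove_of_bound (C := CBH + CAH)
      intro x
      calc |B.H (f x) - A.H x| ≤ |B.H (f x)| + |A.H x| := abs_sub _ _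
        _ ≤ CBH + CAH := add_le_add (hCBH (f x)) (hCAH x)
  refine ⟨part1, ?_⟩
  -- Part 2
  have hne : {r : ℝ | ∃ f₁ f₂ : ℝ ≃ₜ ℝ, InG f₁ ∧ InG f₂ ∧
      r = EDiff (comp A ⇑f₁) B + EDiff A (comp B ⇑f₂)}.Nonempty :=
    ⟨_, Homeomorph.refl ℝ, Homeomorph.refl ℝ, InG_refl, InG_refl, rfl⟩
  have hlb : ∀ r ∈ {r : ℝ | ∃ f₁ f₂ : ℝ ≃ₜ ℝ, InG f₁ ∧ InG f₂ ∧
      r = EDiff (comp A ⇑f₁) B + EDiff A (comp B ⇑f₂)}, LinfDiff A B / 2 ≤ r := by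
    rintro r ⟨f₁, f₂, hf₁, hf₂, rfl⟩
    have L1 := part1 f₁ hf₁
    have L2 := part1' f₂ hf₂
    have E1 := ediff_facts_left A B f₁ hf₁ hAU1 hBU1 hAU2 hAUd2 hBU2 hBUd2
    have E2 := ediff_facts_right A B f₂ hf₂ hAU1 hBU1 hAU2 hAUd2 hBU2 hBUd2
    linarith
  have h := le_csInf hne hlb
  unfold Jdist
  linarith
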